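/- For all finite subsets S, T of Fin (2M), the ℤ₂^{2M} color-algebra bracket of Clifford monomials closes: γ_S · γ_T - (-1)^{p(S,T)} · γ_T · γ_S = (1 - (-1)^{|S|·|T| + Σ_{k<M} σ_k(S)·σ_k(T)}) · γ_S · γ_T in Cl(Q). -/

import Mathlib

section Aux

variable {R M' : Type*} [CommRing R] [AddCommGroup M'] [Module R M']
  (Q : QuadraticForm R M') {N : ℕ} (e : Fin N → M')

local notation "ι" => CliffordAlgebra.ι Q

lemma auxA (horth : ∀ i j : Fin N, i ≠ j → QuadraticMap.polar Q (e i) (e j) = 0)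
    (j : Fin N) (l : List (Fin N)) :
    ι (e j) * (l.map fun i => ι (e i)).prod
      = (-1:ℤ)^((l.filter (· ≠ j)).length) •
        ((l.map fun i => ι (e i)).prod * ι (e j)) := by
  induction l with
  | nil => simp
  | cons a l ih =>
    simp only [List.map_cons, List.prod_cons, List.filter_cons]
    have h2 : ∀ m : ℕ, (-1:ℤ)^(m+m) = 1 := by
      intro m; rw [← two_mul, pow_mul]; norm_num
    by_cases haj : a = j
    · subst haj
      rw [if_neg (by simp)]
      conv_lhs => rw [← mul_assoc, CliffordAlgebra.ι_sq_scalar]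
      conv_rhs => rw [ih, smul_mul_assoc, smul_smul, ← pow_add, mul_assoc,
        CliffordAlgebra.ι_sq_scalar]
      rw [h2, one_smul, Algebra.commutes]
    · rw [if_pos (by simp [haj])]
      have hswap : ι (e j) * ι (e a) = - (ι (e a) * ι (e j)) := by
        have h := CliffordAlgebra.ι_mul_ι_add_swap (Q := Q) (e a) (e j)
        rw [horth a j haj] at h
        simp only [map_zero] at h
        exact eq_neg_of_add_eq_zero_right h
      rw [List.length_cons, pow_succ, mul_neg_one]
      conv_lhs => rw [← mul_assoc, hswap, neg_mul, mul_assoc, ih, mul_smul_comm,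
        ← neg_smul, ← mul_assoc]

lemma auxB (horth : ∀ i j : Fin N, i ≠ j → QuadraticMap.polar Q (e i) (e j) = 0)
    (s t : List (Fin N)) :
    (s.map fun i => ι (e i)).prod * (t.map fun i => ι (e i)).prod
      = (-1:ℤ)^((s.map fun j => (t.filter (· ≠ j)).length).sum) •
        ((t.map fun i => ι (e i)).prod * (s.map fun i => ι (e i)).prod) := by
  induction s with
  | nil => simp
  | cons a s ih =>
    simp only [List.map_cons, List.prod_cons, List.sum_cons]
    rw [mul_assoc, ih, mul_smul_comm, ← mul_assoc, auxA Q e horth a t, smul_mul_assoc,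
      smul_smul, ← pow_add, mul_assoc, Nat.add_comm]

end Aux

lemma nodup_filter_len {N : ℕ} (j : Fin N) :
    ∀ (t : List (Fin N)), t.Nodup →
      (t.filter (· ≠ j)).length + (if j ∈ t then 1 else 0) = t.length := by
  intro t
  induction t with
  | nil => simp
  | cons a t ih =>
    intro hnd
    rw [List.nodup_cons] at hnd
    obtain ⟨hat, hnd⟩ := hnd
    by_cases haj : a = j
    · subst haj
      have hft : t.filter (· ≠ a) = t := by
        apply List.filter_eq_self.2
        intro x hx
        simp only [ne_eq, decide_eq_true_eq]
        intro h
        apply hat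
        rwa [h] at hx
      simp only [List.filter_cons, List.mem_cons, List.length_cons]
      rw [if_neg (by simp), hft]
      simp
    · have hih := ih hnd
      have hja : ¬ (j = a) := fun h => haj h.symm
      rw [List.filter_cons, if_pos (by simp [haj])]
      simp only [List.length_cons]
      have hmem : (j ∈ a :: t) ↔ (j ∈ t) := by simp [hja]
      simp only [ne_eq] at hih ⊢
      by_cases hjt : j ∈ t
      · rw [if_pos (hmem.mpr hjt)]
        rw [if_pos hjt] at hih
        omega
      · rw [if_neg (fun h => hjt (hmem.mp h))]
        rw [if_neg hjt] at hih
        omega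

lemma card_inter_pair {α : Type*} [DecidableEq α] (S : Finset α) (a b : α) (h : a ≠ b) :
    (S ∩ {a, b}).card = (if a ∈ S then 1 else 0) + (if b ∈ S then 1 else 0) := by
  rw [Finset.inter_comm, ← Finset.filter_mem_eq_inter, Finset.card_filter,
    Finset.sum_pair h]

/-- The ordered product of Clifford generators `ι (e i)` over `i ∈ S`,
taken in increasing order of indices, with `γ_∅ = 1`. -/
noncomputable def gammaProd {R M' : Type*} [CommRing R] [AddCommGroup M'] [Module R M']
    (Q : QuadraticForm R M') {N : ℕ} (e : Fin N → M') (S : Finset (Fin N)) :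
    CliffordAlgebra Q :=
  ((S.sort (· ≤ ·)).map fun i => CliffordAlgebra.ι Q (e i)).prod

/-- The index `2k` in `Fin (2M)`. -/
def idx0 {M : ℕ} (k : Fin M) : Fin (2 * M) := ⟨2 * k.val, by omega⟩

/-- The index `2k+1` in `Fin (2M)`. -/
def idx1 {M : ℕ} (k : Fin M) : Fin (2 * M) := ⟨2 * k.val + 1, by omega⟩

/-- The integer pairing `p(S,T) = Σ_{k<M} ([2k ∈ S]·[2k+1 ∈ T] - [2k+1 ∈ S]·[2k ∈ T])`. -/
def pPair {M : ℕ} (S T : Finset (Fin (2 * M))) : ℤ :=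
  ∑ k : Fin M,
    ((if idx0 k ∈ S then (1 : ℤ) else 0) * (if idx1 k ∈ T then 1 else 0) -
      (if idx1 k ∈ S then (1 : ℤ) else 0) * (if idx0 k ∈ T then 1 else 0))


lemma idx0_ne_idx1 {M : ℕ} (k : Fin M) : idx0 k ≠ idx1 k := by
  simp [idx0, idx1, Fin.ext_iff]

lemma card_partition {M : ℕ} (X : Finset (Fin (2*M))) :
    X.card = ∑ k : Fin M, (X ∩ {idx0 k, idx1 k}).card := by
  rw [Finset.card_eq_sum_card_fiberwise
    (f := fun i : Fin (2*M) => (⟨i.val/2, by omega⟩ : Fin M)) (t := Finset.univ)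
    (fun i _ => Finset.mem_univ _)]
  refine Finset.sum_congr rfl fun k _ => ?_
  congr 1
  ext i
  simp only [Finset.mem_filter, Finset.mem_inter, Finset.mem_insert, Finset.mem_singleton,
    idx0, idx1, Fin.ext_iff]
  constructor
  · rintro ⟨hx, hk⟩
    exact ⟨hx, by omega⟩
  · rintro ⟨hx, hk⟩
    exact ⟨hx, by omega⟩

/-- The sector parity `σ_k(S) = |S ∩ {2k, 2k+1}|`. -/
def sigk {M : ℕ} (k : Fin M) (S : Finset (Fin (2 * M))) : ℕ :=
  (S ∩ {idx0 k, idx1 k}).card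

/-- closure of the ℤ₂^{2M} color-algebra bracket of Clifford monomials:
`γ_S·γ_T - (-1)^{p(S,T)}·γ_T·γ_S = (1 - (-1)^{|S|·|T| + Σ_k σ_k(S)·σ_k(T)})·γ_S·γ_T`. -/
theorem gammaProd_color_algebra_bracket_closure {R M' : Type*} [CommRing R] [AddCommGroup M']
    [Module R M'] (Q : QuadraticForm R M') {M : ℕ} (e : Fin (2 * M) → M')
    (horth : ∀ i j : Fin (2 * M), i ≠ j → QuadraticMap.polar Q (e i) (e j) = 0)
    (S T : Finset (Fin (2 * M))) :
    gammaProd Q e S * gammaProd Q e T -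
        ((((-1 : ℤˣ) ^ pPair S T : ℤˣ) : ℤ)) • (gammaProd Q e T * gammaProd Q e S) =
      (1 - (-1 : ℤ) ^ (S.card * T.card + ∑ k : Fin M, sigk k S * sigk k T)) •
        (gammaProd Q e S * gammaProd Q e T) := by
  classical
  set s := S.sort (· ≤ ·) with hs
  set t := T.sort (· ≤ ·) with ht
  set A := gammaProd Q e S * gammaProd Q e T with hA
  -- the commutation exponent
  set n : ℕ := (s.map fun j => (t.filter (· ≠ j)).length).sum with hn
  have hST : gammaProd Q e S * gammaProd Q e T
      = (-1:ℤ)^n • (gammaProd Q e T * gammaProd Q e S) := by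
    unfold gammaProd
    exact auxB Q e horth s t
  -- count: n + |S∩T| = |S|*|T|
  have hcount : n + (S ∩ T).card = S.card * T.card := by
    have hnalt : n = ∑ j ∈ S, (t.filter (· ≠ j)).length := by
      rw [hn, ← Finset.sum_map_toList]
      exact List.Perm.sum_eq (List.Perm.map _ (Finset.sort_perm_toList S _))
    have hterm : ∀ j : Fin (2*M),
        (t.filter (· ≠ j)).length + (if j ∈ T then 1 else 0) = T.card := by
      intro j
      have h := nodup_filter_len j t (Finset.sort_nodup T _)
      simp only [ht, Finset.mem_sort, Finset.length_sort] at h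
      exact h
    have hSint : ∑ j ∈ S, (if j ∈ T then 1 else 0) = (S ∩ T).card := by
      rw [← Finset.card_filter, Finset.filter_mem_eq_inter]
    calc n + (S ∩ T).card
        = ∑ j ∈ S, ((t.filter (· ≠ j)).length + (if j ∈ T then 1 else 0)) := by
          rw [Finset.sum_add_distrib, hnalt, hSint]
      _ = ∑ j ∈ S, T.card := Finset.sum_congr rfl fun j _ => hterm j
      _ = S.card * T.card := by rw [Finset.sum_const, smul_eq_mul]
  -- sign identity
  have hsign : (((-1 : ℤˣ) ^ pPair S T : ℤˣ) : ℤ) * (-1:ℤ)^n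
      = (-1 : ℤ) ^ (S.card * T.card + ∑ k : Fin M, sigk k S * sigk k T) := by
    have h1 : ((-1 : ℤˣ) ^ pPair S T : ℤˣ) = Int.negOnePow (pPair S T) := by
      rw [Int.negOnePow_def]
    have h2 : ∀ m : ℕ, (-1:ℤ)^m = ((Int.negOnePow (m:ℤ) : ℤˣ) : ℤ) := by
      intro m
      rw [Int.negOnePow_def, zpow_natCast, Units.val_pow_eq_pow_val, Units.val_neg, Units.val_one]
    rw [h1, h2, h2, ← Units.val_mul, ← Int.negOnePow_add]
    congr 1
    rw [Int.negOnePow_eq_iff]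
    -- reduce parity to per-sector computation
    have hc : ((S ∩ T).card : ℤ) = ∑ k : Fin M,
        ((if idx0 k ∈ S then (1:ℤ) else 0) * (if idx0 k ∈ T then 1 else 0)
          + (if idx1 k ∈ S then (1:ℤ) else 0) * (if idx1 k ∈ T then 1 else 0)) := by
      rw [card_partition (S ∩ T)]
      push_cast
      refine Finset.sum_congr rfl fun k _ => ?_
      rw [card_inter_pair _ _ _ (idx0_ne_idx1 k)]
      simp only [Finset.mem_inter]
      push_cast
      by_cases h0S : idx0 k ∈ S <;> by_cases h0T : idx0 k ∈ T <;>
        by_cases h1S : idx1 k ∈ S <;> by_cases h1T : idx1 k ∈ T <;>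
        simp [h0S, h0T, h1S, h1T]
    have hsig : ∀ (k : Fin M) (X : Finset (Fin (2*M))), (sigk k X : ℤ)
        = (if idx0 k ∈ X then (1:ℤ) else 0) + (if idx1 k ∈ X then 1 else 0) := by
      intro k X
      rw [sigk, card_inter_pair _ _ _ (idx0_ne_idx1 k)]
      by_cases h0 : idx0 k ∈ X <;> by_cases h1 : idx1 k ∈ X <;> simp [h0, h1]
    have hn' : (n : ℤ) = (S.card : ℤ) * (T.card : ℤ) - ((S ∩ T).card : ℤ) := by
      have h := hcount
      have h2 : ((n + (S ∩ T).card : ℕ) : ℤ) = ((S.card * T.card : ℕ) : ℤ) := by rw [h]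
      push_cast at h2
      linarith
    have hgoal : pPair S T + (n : ℤ)
        - ((S.card * T.card + ∑ k : Fin M, sigk k S * sigk k T : ℕ) : ℤ)
        = pPair S T - ((S ∩ T).card : ℤ)
          - ∑ k : Fin M, ((sigk k S : ℤ) * (sigk k T : ℤ)) := by
      push_cast
      rw [hn']
      ring
    rw [hgoal, hc]
    unfold pPair
    rw [← Finset.sum_sub_distrib, ← Finset.sum_sub_distrib]
    apply Finset.even_sum
    intro k _
    rw [hsig, hsig]
    by_cases h0S : idx0 k ∈ S <;> by_cases h0T : idx0 k ∈ T <;>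
      by_cases h1S : idx1 k ∈ S <;> by_cases h1T : idx1 k ∈ T <;>
      simp [h0S, h0T, h1S, h1T] <;> decide
  -- assemble
  have hTS : gammaProd Q e T * gammaProd Q e S = (-1:ℤ)^n • A := by
    rw [hA, hST, smul_smul, ← pow_add, ← two_mul, pow_mul]
    norm_num
  rw [hTS, smul_smul, hsign, sub_smul, one_smul]
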